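/- arXiv:1402.2587 — 6 statements merged into one kernel-verified Lean document; each statement's English description precedes it below -/
import Mathlib

section
/- The string rewriting system on {x, y} with rules xyx → yy and yyyx → xyyy is confluent: all its critical branchings are confluent, hence by Newman's lemma (using termination) it is confluent. -/
/-- The two-letter alphabet {x, y}. -/
inductive XY : Type
  | x : XY
  | y : XY

open XY

/-- One step of string rewriting for a set of rules `R`: replace a factor `l`
of a word by `r`, i.e. `p ++ l ++ s → p ++ r ++ s` for a rule `(l, r) ∈ R`. -/
def StringStep {A : Type*} (R : Set (List A × List A)) (u v : List A) : Prop :=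
  ∃ p l r s : List A, (l, r) ∈ R ∧ u = p ++ l ++ s ∧ v = p ++ r ++ s

namespace XYConf

abbrev R : Set (List XY × List XY) := {([x, y, x], [y, y]), ([y, y, y, x], [x, y, y, y])}

abbrev Step := StringStep R
abbrev Steps := Relation.ReflTransGen Step

lemma mem1 : (([x,y,x],[y,y]) : List XY × List XY) ∈ R := by left; rfl
lemma mem2 : (([y,y,y,x],[x,y,y,y]) : List XY × List XY) ∈ R := by right; rfl

lemma steps_of_eq {u v : List XY} (h : u = v) : Steps u v := h ▸ Relation.ReflTransGen.refl

def bit : XY → ℕ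
  | x => 0
  | y => 1

def v0 (n : ℕ) (w : List XY) : ℕ := w.foldl (fun n a => 2*n + bit a) n

lemma v0_append (n : ℕ) (u w : List XY) : v0 n (u ++ w) = v0 (v0 n u) w :=
  List.foldl_append ..

lemma v0_eq (n : ℕ) (w : List XY) : v0 n w = n * 2 ^ w.length + v0 0 w := by
  induction w generalizing n with
  | nil => simp [v0]
  | cons a t ih =>
      simp only [v0, List.foldl_cons, List.length_cons] at *
      rw [ih (2*n + bit a), ih (2*0 + bit a)]
      ring

lemma v0_lt_v0 {n m : ℕ} (h : n < m) (w : List XY) : v0 n w < v0 m w := by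
  rw [v0_eq n w, v0_eq m w]
  have h2 : 0 < 2 ^ w.length := Nat.pow_pos (by norm_num)
  nlinarith

lemma one_le_v0 (w : List XY) : 1 ≤ v0 1 w := by
  rw [v0_eq]
  have h2 : 0 < 2 ^ w.length := Nat.pow_pos (by norm_num)
  omega

lemma step_decreases {u v : List XY} (h : Step u v) : v0 1 v < v0 1 u := by
  obtain ⟨p, l, r, s, hm, rfl, rfl⟩ := h
  rw [List.append_assoc, List.append_assoc, v0_append, v0_append, v0_append, v0_append]
  apply v0_lt_v0
  have hk := one_le_v0 p
  set k := v0 1 p with hkdef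
  simp only [Set.mem_insert_iff, Set.mem_singleton_iff, Prod.mk.injEq] at hm
  rcases hm with ⟨rfl, rfl⟩ | ⟨rfl, rfl⟩ <;> simp [v0, bit] <;> omega


lemma lc_aux (p1 l1 r1 s1 p2 l2 r2 s2 : List XY)
    (h1 : (l1, r1) ∈ R) (h2 : (l2, r2) ∈ R)
    (hle : p1.length ≤ p2.length)
    (heq : p1 ++ l1 ++ s1 = p2 ++ l2 ++ s2) :
    ∃ d, Steps (p1 ++ r1 ++ s1) d ∧ Steps (p2 ++ r2 ++ s2) d := by
  obtain ⟨q, rfl⟩ : p1 <+: p2 := by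
    refine List.prefix_of_prefix_length_le (l₃ := p2 ++ l2 ++ s2)
      ⟨l1 ++ s1, ?_⟩ ⟨l2 ++ s2, ?_⟩ hle
    · rw [← List.append_assoc]; exact heq
    · rw [← List.append_assoc]
  have heq2 : l1 ++ s1 = q ++ (l2 ++ s2) := by
    apply List.append_cancel_left (as := p1)
    simpa [List.append_assoc] using heq
  rcases le_or_gt l1.length q.length with hql | hql
  · -- disjoint case
    obtain ⟨m, rfl⟩ : l1 <+: q :=
      List.prefix_of_prefix_length_le ⟨s1, heq2⟩ ⟨l2 ++ s2, rfl⟩ hql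
    have hs1 : s1 = m ++ (l2 ++ s2) := by
      simpa [List.append_assoc] using heq2
    subst hs1
    refine ⟨p1 ++ r1 ++ (m ++ (r2 ++ s2)), ?_, ?_⟩
    · exact Relation.ReflTransGen.single
        ⟨p1 ++ r1 ++ m, l2, r2, s2, h2, by simp, by simp⟩
    · exact Relation.ReflTransGen.single
        ⟨p1, l1, r1, m ++ (r2 ++ s2), h1, by simp, by simp⟩
  · -- overlap case
    obtain ⟨o, ho⟩ : q <+: l1 :=
      List.prefix_of_prefix_length_le ⟨l2 ++ s2, heq2.symm⟩ ⟨s1, rfl⟩ hql.le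
    simp only [Set.mem_insert_iff, Set.mem_singleton_iff, Prod.mk.injEq] at h1 h2
    rcases h1 with ⟨rfl, rfl⟩ | ⟨rfl, rfl⟩
    · -- l1 = [x,y,x]
      rcases q with _ | ⟨a, _ | ⟨b, _ | ⟨c, q'⟩⟩⟩
      · -- q = []
        rcases h2 with ⟨rfl, rfl⟩ | ⟨rfl, rfl⟩
        · have hs : s1 = s2 := by simpa using heq2
          exact ⟨p1 ++ [y, y] ++ s1, Relation.ReflTransGen.refl,
            steps_of_eq (by simp [hs])⟩
        · simp at heq2
      · -- q = [a]
        obtain ⟨rfl, rfl⟩ : a = x ∧ o = [y, x] := by simpa using ho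
        rcases h2 with ⟨rfl, rfl⟩ | ⟨rfl, rfl⟩ <;> simp at heq2
      · -- q = [a, b]
        obtain ⟨rfl, rfl, rfl⟩ : a = x ∧ b = y ∧ o = [x] := by simpa using ho
        rcases h2 with ⟨rfl, rfl⟩ | ⟨rfl, rfl⟩
        · obtain rfl : s1 = y :: x :: s2 := by simpa using heq2
          refine ⟨p1 ++ [x, y, y, y] ++ s2, ?_, steps_of_eq (by simp)⟩
          exact Relation.ReflTransGen.single
            ⟨p1, [y, y, y, x], [x, y, y, y], s2, mem2, by simp, by simp⟩
        · simp at heq2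
      · -- |q| ≥ 3, contradiction
        exfalso
        simp at hql
        omega
    · -- l1 = [y,y,y,x]
      rcases q with _ | ⟨a, _ | ⟨b, _ | ⟨c, _ | ⟨e, q'⟩⟩⟩⟩
      · -- q = []
        rcases h2 with ⟨rfl, rfl⟩ | ⟨rfl, rfl⟩
        · simp at heq2
        · have hs : s1 = s2 := by simpa using heq2
          exact ⟨p1 ++ [x, y, y, y] ++ s1, Relation.ReflTransGen.refl,
            steps_of_eq (by simp [hs])⟩
      · -- q = [a]
        obtain ⟨rfl, rfl⟩ : a = y ∧ o = [y, y, x] := by simpa using ho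
        rcases h2 with ⟨rfl, rfl⟩ | ⟨rfl, rfl⟩ <;> simp at heq2
      · -- q = [a, b]
        obtain ⟨rfl, rfl, rfl⟩ : a = y ∧ b = y ∧ o = [y, x] := by simpa using ho
        rcases h2 with ⟨rfl, rfl⟩ | ⟨rfl, rfl⟩ <;> simp at heq2
      · -- q = [a, b, c]
        obtain ⟨rfl, rfl, rfl, rfl⟩ : a = y ∧ b = y ∧ c = y ∧ o = [x] := by
          simpa using ho
        rcases h2 with ⟨rfl, rfl⟩ | ⟨rfl, rfl⟩
        · obtain rfl : s1 = y :: x :: s2 := by simpa using heq2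
          refine ⟨p1 ++ [y, y, y, y, y] ++ s2, ?_, steps_of_eq (by simp)⟩
          refine Relation.ReflTransGen.head
            ⟨p1 ++ [x, y], [y, y, y, x], [x, y, y, y], s2, mem2, by simp, rfl⟩
            (Relation.ReflTransGen.single
              ⟨p1, [x, y, x], [y, y], [y, y, y] ++ s2, mem1, by simp, by simp⟩)
        · simp at heq2
      · -- |q| ≥ 4, contradiction
        exfalso
        simp at hql
        omega

lemma locally_confluent {a b c : List XY} (hab : Step a b) (hac : Step a c) :
    ∃ d, Steps b d ∧ Steps c d := by
  obtain ⟨p1, l1, r1, s1, h1, rfl, rfl⟩ := hab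
  obtain ⟨p2, l2, r2, s2, h2, heq, rfl⟩ := hac
  rcases le_total p1.length p2.length with hle | hle
  · exact lc_aux p1 l1 r1 s1 p2 l2 r2 s2 h1 h2 hle heq
  · obtain ⟨d, hd1, hd2⟩ := lc_aux p2 l2 r2 s2 p1 l1 r1 s1 h2 h1 hle heq.symm
    exact ⟨d, hd2, hd1⟩


lemma conf_of_bound : ∀ n : ℕ, ∀ a : List XY, v0 1 a ≤ n →
    ∀ b c : List XY, Steps a b → Steps a c → ∃ d, Steps b d ∧ Steps c d := by
  intro n
  induction n with
  | zero =>
      intro a ha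
      exact absurd (one_le_v0 a) (by omega)
  | succ n ih =>
      intro a ha b c hab hac
      rcases Relation.ReflTransGen.cases_head hab with rfl | ⟨b₁, hab₁, hb₁b⟩
      · exact ⟨c, hac, Relation.ReflTransGen.refl⟩
      rcases Relation.ReflTransGen.cases_head hac with rfl | ⟨c₁, hac₁, hc₁c⟩
      · exact ⟨b, Relation.ReflTransGen.refl, hab⟩
      obtain ⟨d₁, hbd₁, hcd₁⟩ := locally_confluent hab₁ hac₁
      have hb₁ : v0 1 b₁ ≤ n := by have := step_decreases hab₁; omega
      obtain ⟨e, hbe, hd₁e⟩ := ih b₁ hb₁ b d₁ hb₁b hbd₁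
      have hc₁ : v0 1 c₁ ≤ n := by have := step_decreases hac₁; omega
      obtain ⟨f, hef, hcf⟩ := ih c₁ hc₁ e c (hcd₁.trans hd₁e) hc₁c
      exact ⟨f, hbe.trans hef, hcf⟩

end XYConf


/-- The string rewriting system on {x, y} with rules xyx → yy and
yyyx → xyyy is confluent. -/
theorem xyx_yy_completion_confluent :
    ∀ a b c : List XY,
      Relation.ReflTransGen
        (StringStep ({([x, y, x], [y, y]), ([y, y, y, x], [x, y, y, y])} :
          Set (List XY × List XY))) a b →
      Relation.ReflTransGen
        (StringStep ({([x, y, x], [y, y]), ([y, y, y, x], [x, y, y, y])} :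
          Set (List XY × List XY))) a c →
      ∃ d : List XY,
        Relation.ReflTransGen
          (StringStep ({([x, y, x], [y, y]), ([y, y, y, x], [x, y, y, y])} :
            Set (List XY × List XY))) b d ∧
        Relation.ReflTransGen
          (StringStep ({([x, y, x], [y, y]), ([y, y, y, x], [x, y, y, y])} :
            Set (List XY × List XY))) c d := by
  intro a b c hab hac
  exact XYConf.conf_of_bound (XYConf.v0 1 a) a le_rfl b c hab hac
end

section
/- Let M be a monoid generated by a set X (i.e., every element of M is a product of elements of X). Define the left ℤM-module map d₁ : ℤM[X] → ℤM on the free module over X by d₁[x] = x − 1. Then the image of d₁ equals the augmentation ideal ker ε, where ε : ℤM → ℤ is the augmentation. In particular every generated monoid M yields an exact sequence ℤM[X] → ℤM → ℤ → 0. -/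
/-- For a monoid M generated by a set X (via i : X → M), the left ℤM-module
map d₁ : ℤM[X] → ℤM defined on the free module over X by d₁[x] = x − 1 has
image exactly the augmentation ideal ker ε. Together with the surjectivity of
the augmentation ε, this gives the exact sequence ℤM[X] → ℤM → ℤ → 0. -/
theorem range_d1_eq_augmentation_ideal {M X : Type*} [Monoid M] (i : X → M)
    (hgen : Submonoid.closure (Set.range i) = ⊤) :
    LinearMap.range
        (Finsupp.linearCombination (MonoidAlgebra ℤ M)
          (fun x : X => MonoidAlgebra.of ℤ M (i x) - 1)) =
      RingHom.ker (MonoidAlgebra.lift ℤ ℤ M (1 : M →* ℤ) :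
          MonoidAlgebra ℤ M →ₐ[ℤ] ℤ).toRingHom ∧
    Function.Surjective
      (MonoidAlgebra.lift ℤ ℤ M (1 : M →* ℤ) : MonoidAlgebra ℤ M →ₐ[ℤ] ℤ) := by
  set ε := (MonoidAlgebra.lift ℤ ℤ M (1 : M →* ℤ) : MonoidAlgebra ℤ M →ₐ[ℤ] ℤ) with hε
  set S := LinearMap.range
        (Finsupp.linearCombination (MonoidAlgebra ℤ M)
          (fun x : X => MonoidAlgebra.of ℤ M (i x) - 1)) with hS
  -- key: of m - 1 ∈ S for all m
  have key : ∀ m : M, MonoidAlgebra.of ℤ M m - 1 ∈ S := by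
    intro m
    have hm : m ∈ Submonoid.closure (Set.range i) := by rw [hgen]; trivial
    induction hm using Submonoid.closure_induction with
    | mem x hx =>
        obtain ⟨y, rfl⟩ := hx
        rw [hS, Finsupp.range_linearCombination]
        exact Submodule.subset_span ⟨y, rfl⟩
    | one => simpa [MonoidAlgebra.one_def] using S.zero_mem
    | mul a b _ _ ha hb =>
        have : MonoidAlgebra.of ℤ M (a * b) - 1
            = MonoidAlgebra.of ℤ M a * (MonoidAlgebra.of ℤ M b - 1)
              + (MonoidAlgebra.of ℤ M a - 1) := by
          rw [map_mul]; noncomm_ring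
        rw [this]
        exact S.add_mem (S.smul_mem (MonoidAlgebra.of ℤ M a) hb) ha
  constructor
  · apply le_antisymm
    · rw [hS, Finsupp.range_linearCombination, Submodule.span_le]
      rintro _ ⟨y, rfl⟩
      simp [RingHom.mem_ker, hε, MonoidAlgebra.lift_of]
    · intro f hf
      have hεf : f.coeff.sum (fun _ b => b) = 0 := by
        have := hf
        rw [RingHom.mem_ker] at this
        simpa [hε, MonoidAlgebra.lift_apply] using this
      have hrep : f = f.coeff.sum (fun m a => a • (MonoidAlgebra.of ℤ M m - 1)) := by
        have h1 : f = f.coeff.sum (fun m a => a • MonoidAlgebra.of ℤ M m) := by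
          conv_lhs => rw [← MonoidAlgebra.sum_coeff_single f]
          congr 1
          ext m a
          simp [MonoidAlgebra.of_apply, Finsupp.smul_single]
        calc f = f.coeff.sum (fun m a => a • MonoidAlgebra.of ℤ M m)
                  - (f.coeff.sum fun _ b => b) • (1 : MonoidAlgebra ℤ M) := by
                rw [hεf]; simpa using h1
          _ = f.coeff.sum (fun m a => a • (MonoidAlgebra.of ℤ M m - 1)) := by
                rw [Finsupp.sum, Finsupp.sum, Finsupp.sum, Finset.sum_smul]
                rw [← Finset.sum_sub_distrib]
                congr 1; ext m; rw [smul_sub]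
      rw [hrep]
      exact Submodule.sum_mem S fun m _ => S.smul_of_tower_mem _ (key m)
  · intro n
    exact ⟨n • 1, by simp [hε]⟩
end

section
/- Let M be a monoid presented by generators X and relations R. Then the sequence ℤM[R] → ℤM[X] → ℤM → ℤ → 0, with maps the Reidemeister–Fox Jacobian d₂, the map d₁ ([x] ↦ x̄ − 1), and the augmentation ε, is exact. Consequently, every finitely presented monoid is of homological type left-FP₂. -/
/-- The Fox bracket [·] : X* → ℤM[X], defined by [1] = 0 and
[x·u] = [x] + x̄·[u]. -/
noncomputable def foxBracket {M X : Type*} [Monoid M] (i : X → M) :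
    List X → (X →₀ MonoidAlgebra ℤ M)
  | [] => 0
  | x :: u => Finsupp.single x 1 + MonoidAlgebra.of ℤ M (i x) • foxBracket i u

section Aux

variable {M X : Type*} [Monoid M] (i : X → M)

lemma foxBracket_append (u v : List X) :
    foxBracket i (u ++ v) =
      foxBracket i u + MonoidAlgebra.of ℤ M ((u.map i).prod) • foxBracket i v := by
  induction u with
  | nil => simp [foxBracket, ← MonoidAlgebra.one_def]
  | cons x u ih =>
      simp only [List.cons_append, List.append_eq, foxBracket, ih, smul_add, smul_smul,
        List.map_cons, List.prod_cons, map_mul, add_assoc]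

lemma d1_foxBracket (u : List X) :
    Finsupp.linearCombination (MonoidAlgebra ℤ M)
        (fun x : X => MonoidAlgebra.of ℤ M (i x) - 1) (foxBracket i u) =
      MonoidAlgebra.of ℤ M ((u.map i).prod) - 1 := by
  induction u with
  | nil => simp [foxBracket, ← MonoidAlgebra.one_def]
  | cons x u ih =>
      rw [foxBracket, map_add, map_smul, ih, Finsupp.linearCombination_single, one_smul,
        smul_sub, smul_eq_mul, smul_eq_mul, mul_one, ← map_mul, List.map_cons, List.prod_cons]
      abel

end Aux

/-- If M is a monoid presented by generators X and relations R (i.e. the map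
X* → M is surjective and identifies two words exactly when they are congruent
modulo the relations), then the sequence
ℤM[R] —d₂→ ℤM[X] —d₁→ ℤM —ε→ ℤ → 0 is exact, where d₂ is the
Reidemeister–Fox Jacobian d₂[α] = [l α] − [r α], d₁[x] = x̄ − 1 and ε is the
augmentation. In particular (for X and R finite, all these modules being
finitely generated free), every finitely presented monoid is of homological
type left-FP₂. -/
theorem squier_exact_sequence_length_two {M X ρ : Type*} [Monoid M] (i : X → M)
    (l r : ρ → List X)
    (hsurj : Function.Surjective (fun u : List X => (u.map i).prod))
    (hpres : ∀ u v : List X, (u.map i).prod = (v.map i).prod ↔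
      Relation.EqvGen
        (StringStep {p : List X × List X | ∃ a : ρ, p = (l a, r a)}) u v) :
    Function.Surjective
        (MonoidAlgebra.lift ℤ ℤ M (1 : M →* ℤ) : MonoidAlgebra ℤ M →ₐ[ℤ] ℤ) ∧
    LinearMap.range
        (Finsupp.linearCombination (MonoidAlgebra ℤ M)
          (fun x : X => MonoidAlgebra.of ℤ M (i x) - 1)) =
      RingHom.ker (MonoidAlgebra.lift ℤ ℤ M (1 : M →* ℤ) :
          MonoidAlgebra ℤ M →ₐ[ℤ] ℤ).toRingHom ∧
    LinearMap.range
        (Finsupp.linearCombination (MonoidAlgebra ℤ M)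
          (fun a : ρ => foxBracket i (l a) - foxBracket i (r a))) =
      LinearMap.ker
        (Finsupp.linearCombination (MonoidAlgebra ℤ M)
          (fun x : X => MonoidAlgebra.of ℤ M (i x) - 1)) := by
  set ε := (MonoidAlgebra.lift ℤ ℤ M (1 : M →* ℤ) : MonoidAlgebra ℤ M →ₐ[ℤ] ℤ) with hε
  set d1 := Finsupp.linearCombination (MonoidAlgebra ℤ M)
      (fun x : X => MonoidAlgebra.of ℤ M (i x) - 1) with hd1
  set d2 := Finsupp.linearCombination (MonoidAlgebra ℤ M)
      (fun a : ρ => foxBracket i (l a) - foxBracket i (r a)) with hd2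
  have hεs : ∀ (m : M) (z : ℤ), ε (MonoidAlgebra.single m z) = z := by
    intro m z
    simp [hε, MonoidAlgebra.lift_single]
  have hεof : ∀ m : M, ε (MonoidAlgebra.of ℤ M m) = 1 := by
    intro m
    rw [MonoidAlgebra.of_apply]
    exact hεs m 1
  have hlr : ∀ a : ρ, ((l a).map i).prod = ((r a).map i).prod := by
    intro a
    exact (hpres _ _).mpr (Relation.EqvGen.rel _ _
      ⟨[], l a, r a, [], ⟨a, rfl⟩, by simp, by simp⟩)
  obtain ⟨σ, hσ⟩ := Function.Surjective.hasRightInverse hsurj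
  have hσ' : ∀ m : M, ((σ m).map i).prod = m := hσ
  refine ⟨?_, ?_, ?_⟩
  · -- surjectivity of ε
    intro z
    exact ⟨(z : MonoidAlgebra ℤ M), by simp [hε]⟩
  · -- range d1 = ker ε
    apply le_antisymm
    · rw [hd1, Finsupp.range_linearCombination, Submodule.span_le]
      rintro _ ⟨x, rfl⟩
      have : ε (MonoidAlgebra.of ℤ M (i x) - 1) = 0 := by
        rw [map_sub, map_one, hεof, sub_self]
      simpa [RingHom.mem_ker] using this
    · intro ξ hξ
      have hξ0 : ε ξ = 0 := hξ
      have key : ∀ ξ : MonoidAlgebra ℤ M,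
          ξ - algebraMap ℤ (MonoidAlgebra ℤ M) (ε ξ) ∈ LinearMap.range d1 := by
        intro ξ
        induction ξ using MonoidAlgebra.induction_on with
        | of m =>
            rw [hεof, map_one]
            exact ⟨foxBracket i (σ m), by rw [hd1, d1_foxBracket, hσ' m]⟩
        | add f g hf hg =>
            have := Submodule.add_mem _ hf hg
            convert this using 1
            rw [map_add, map_add]
            abel
        | smul z f hf =>
            rw [map_smul, smul_eq_mul, map_mul, eq_intCast (algebraMap ℤ (MonoidAlgebra ℤ M)),
              ← smul_eq_mul, Int.cast_smul_eq_zsmul, ← smul_sub]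
            exact Submodule.smul_of_tower_mem _ z hf
      have := key ξ
      rwa [hξ0, map_zero, sub_zero] at this
  · -- range d2 = ker d1
    set N := LinearMap.range d2 with hN
    have lemA : ∀ u v : List X,
        Relation.EqvGen
          (StringStep {p : List X × List X | ∃ a : ρ, p = (l a, r a)}) u v →
        foxBracket i u - foxBracket i v ∈ N := by
      intro u v h
      induction h with
      | rel u v h =>
          obtain ⟨p, li, ri, s, ⟨a, ha⟩, hu, hv⟩ := h
          injection ha with h1 h2
          subst h1 h2 hu hv
          have hmem : MonoidAlgebra.of ℤ M ((p.map i).prod) •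
              (foxBracket i (l a) - foxBracket i (r a)) ∈ N := by
            refine Submodule.smul_mem _ _ ⟨Finsupp.single a 1, ?_⟩
            rw [hd2, Finsupp.linearCombination_single, one_smul]
          convert hmem using 1
          rw [foxBracket_append i (p ++ l a) s, foxBracket_append i p (l a),
            foxBracket_append i (p ++ r a) s, foxBracket_append i p (r a)]
          simp only [List.map_append, List.prod_append, hlr a, smul_add, smul_smul, ← map_mul,
            smul_sub]
          abel
      | refl u => simp [Submodule.zero_mem]
      | symm u v _ ih => simpa using Submodule.neg_mem _ ih
      | trans u v w _ _ ih1 ih2 => simpa using Submodule.add_mem _ ih1 ih2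
    have lemB : ∀ u : List X,
        foxBracket i u - foxBracket i (σ ((u.map i).prod)) ∈ N := by
      intro u
      exact lemA _ _ ((hpres _ _).mp (by rw [hσ' ((u.map i).prod)]))
    -- the ℤ-linear section s : ℤM → ℤM[X]
    set s : MonoidAlgebra ℤ M →ₗ[ℤ] (X →₀ MonoidAlgebra ℤ M) :=
      (Finsupp.linearCombination ℤ (fun m : M => foxBracket i (σ m))).comp
        (MonoidAlgebra.coeffLinearEquiv ℤ).toLinearMap with hs
    have hss : ∀ (m : M) (z : ℤ), s (MonoidAlgebra.single m z) = z • foxBracket i (σ m) := by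
      intro m z
      exact Finsupp.linearCombination_single ℤ z m
    -- key homotopy identity
    have lemC : ∀ ξ : X →₀ MonoidAlgebra ℤ M, ξ - s (d1 ξ) ∈ N := by
      have hsingle : ∀ (x : X) (c : MonoidAlgebra ℤ M),
          Finsupp.single x c - s (d1 (Finsupp.single x c)) ∈ N := by
        intro x c
        induction c using MonoidAlgebra.induction_on with
        | of m =>
            have e1 : d1 (Finsupp.single x (MonoidAlgebra.of ℤ M m)) =
                MonoidAlgebra.single (m * i x) (1 : ℤ) - MonoidAlgebra.single m (1 : ℤ) := by
              rw [hd1, Finsupp.linearCombination_single, smul_sub, smul_eq_mul, smul_eq_mul,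
                mul_one]
              congr 1
              exact (MonoidAlgebra.single_mul_single _ _ _ _).trans (by simp)
            rw [e1, map_sub, hss, hss, one_smul, one_smul]
            have e2 : foxBracket i (σ m ++ [x]) =
                foxBracket i (σ m) + Finsupp.single x (MonoidAlgebra.single m (1 : ℤ)) := by
              rw [foxBracket_append, hσ' m]
              congr 1
              show MonoidAlgebra.of ℤ M m • (Finsupp.single x (1 : MonoidAlgebra ℤ M) +
                MonoidAlgebra.of ℤ M (i x) • (0 : X →₀ MonoidAlgebra ℤ M)) = _
              rw [smul_zero, add_zero, Finsupp.smul_single, smul_eq_mul, mul_one,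
                MonoidAlgebra.of_apply]
            have e3 : ((σ m ++ [x]).map i).prod = m * i x := by
              simp [hσ' m]
            have := lemB (σ m ++ [x])
            rw [e2, e3] at this
            convert this using 1
            simp only [MonoidAlgebra.of_apply, MonoidAlgebra.single]
            abel
        | add f g hf hg =>
            have := Submodule.add_mem _ hf hg
            convert this using 1
            rw [Finsupp.single_add, map_add, map_add]
            abel
        | smul z f hf =>
            rw [← Finsupp.smul_single, LinearMap.map_smul_of_tower, map_smul, ← smul_sub]
            exact Submodule.smul_of_tower_mem _ z hf
      intro ξ
      induction ξ using Finsupp.induction_linear with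
      | zero => simp [Submodule.zero_mem]
      | add f g hf hg =>
          have := Submodule.add_mem _ hf hg
          convert this using 1
          rw [map_add, map_add]
          abel
      | single x c => exact hsingle x c
    apply le_antisymm
    · rw [hN, hd2, Finsupp.range_linearCombination, Submodule.span_le]
      rintro _ ⟨a, rfl⟩
      have : d1 (foxBracket i (l a) - foxBracket i (r a)) = 0 := by
        rw [map_sub, hd1, d1_foxBracket, d1_foxBracket, hlr a, sub_self]
      simpa [LinearMap.mem_ker] using this
    · intro ξ hξ
      have hξ0 : d1 ξ = 0 := hξ
      have := lemC ξ
      rwa [hξ0, map_zero, sub_zero] at this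
end

section
/- The string rewriting system on the alphabet {a, b, t, x, y} with rules a tⁿ b → 1 for all n ∈ ℕ, x a → a t x, x t → t x, x b → b x, x y → 1 is terminating. -/
/-- The alphabet {a, b, t, x, y} of Squier's example. -/
inductive Sq : Type
  | a : Sq
  | b : Sq
  | t : Sq
  | x : Sq
  | y : Sq

open Sq

/-- The rules of Squier's infinite convergent presentation:
a tⁿ b → 1 (n ∈ ℕ), xa → atx, xt → tx, xb → bx, xy → 1. -/
def SqRules : Set (List Sq × List Sq) :=
  {p | (∃ n : ℕ, p = (a :: List.replicate n t ++ [b], [])) ∨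
    p = ([x, a], [a, t, x]) ∨ p = ([x, t], [t, x]) ∨
    p = ([x, b], [b, x]) ∨ p = ([x, y], [])}

/-- A weight for each letter, a strictly monotone function ℕ → ℕ. -/
def sqW : Sq → ℕ → ℕ
  | a, m => m + 2
  | b, m => m + 1
  | t, m => m + 1
  | x, m => 2 * m
  | y, m => m + 1

lemma sqW_strictMono (c : Sq) : StrictMono (sqW c) := by
  cases c <;> · intro m n h; simp [sqW]; omega

/-- The interpretation of a word as a function ℕ → ℕ. -/
def sqM : List Sq → ℕ → ℕ
  | [], m => m
  | c :: u, m => sqW c (sqM u m)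

lemma sqM_append (u v : List Sq) (m : ℕ) : sqM (u ++ v) m = sqM u (sqM v m) := by
  induction u with
  | nil => rfl
  | cons c u ih => simp [sqM, ih]

lemma sqM_strictMono (u : List Sq) : StrictMono (sqM u) := by
  induction u with
  | nil => exact fun m n h => h
  | cons c u ih => exact fun m n h => sqW_strictMono c (ih h)

lemma sqM_rep_t (n m : ℕ) : sqM (List.replicate n t ++ [b]) m = m + 1 + n := by
  induction n with
  | zero => simp [sqM, sqW]
  | succ n ih =>
    rw [List.replicate_succ, List.cons_append]
    show sqW t (sqM (List.replicate n t ++ [b]) m) = m + 1 + (n + 1)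
    rw [ih]; simp [sqW]; omega

lemma sqM_rule {l r : List Sq} (h : (l, r) ∈ SqRules) (m : ℕ) : sqM r m < sqM l m := by
  rcases h with ⟨n, hp⟩ | hp | hp | hp | hp <;>
    simp only [Prod.mk.injEq] at hp <;>
    rcases hp with ⟨h1, h2⟩ <;> subst h1 <;> subst h2
  · show m < sqM (a :: (List.replicate n t ++ [b])) m
    simp only [sqM, sqM_rep_t, sqW]; omega
  all_goals simp [sqM, sqW]; omega

lemma sqM_step {u v : List Sq} (h : StringStep SqRules u v) : sqM v 0 < sqM u 0 := by
  obtain ⟨p, l, r, s, hR, hu, hv⟩ := h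
  subst hu; subst hv
  simp only [sqM_append]
  exact sqM_strictMono p (sqM_rule hR (sqM s 0))

/-- Squier's string rewriting system is terminating: there is no infinite
sequence of rewriting steps. -/
theorem squier_system_terminating :
    ¬ ∃ f : ℕ → List Sq, ∀ n : ℕ, StringStep SqRules (f n) (f (n + 1)) := by
  rintro ⟨f, hf⟩
  have hdec : ∀ n, sqM (f (n + 1)) 0 < sqM (f n) 0 := fun n => sqM_step (hf n)
  have hle : ∀ n, sqM (f n) 0 + n ≤ sqM (f 0) 0 := by
    intro n
    induction n with
    | zero => omega
    | succ n ih => have := hdec n; omega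
  have := hle (sqM (f 0) 0 + 1)
  omega
end

section
/- In the monoid S₁ presented by ⟨a, b, t, x, y ∣ ab = 1, xa = atx, xt = tx, xb = bx, xy = 1⟩, the relation a tⁿ b = 1 holds for every natural number n. -/
open Sq

/-- The finite presentation of Squier's monoid S₁:
ab = 1, xa = atx, xt = tx, xb = bx, xy = 1. -/
def S1Rules : Set (List Sq × List Sq) :=
  {([a, b], []), ([x, a], [a, t, x]), ([x, t], [t, x]),
    ([x, b], [b, x]), ([x, y], [])}

lemma stringStep_context {A : Type*} {R : Set (List A × List A)} (p s : List A)
    {u v : List A} (h : StringStep R u v) : StringStep R (p ++ u ++ s) (p ++ v ++ s) := by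
  obtain ⟨p', l, r, s', hmem, hu, hv⟩ := h
  exact ⟨p ++ p', l, r, s' ++ s, hmem, by simp [hu], by simp [hv]⟩

lemma eqvGen_context {A : Type*} {R : Set (List A × List A)} (p s : List A)
    {u v : List A} (h : Relation.EqvGen (StringStep R) u v) :
    Relation.EqvGen (StringStep R) (p ++ u ++ s) (p ++ v ++ s) := by
  induction h with
  | rel u v h => exact Relation.EqvGen.rel _ _ (stringStep_context p s h)
  | refl u => exact Relation.EqvGen.refl _
  | symm u v _ ih => exact ih.symm _ _
  | trans u v w _ _ ih1 ih2 => exact ih1.trans _ _ _ ih2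

lemma xt_move : ∀ (n : ℕ) (s : List Sq),
    Relation.EqvGen (StringStep S1Rules)
      (x :: List.replicate n t ++ s) (List.replicate n t ++ x :: s) := by
  intro n
  induction n with
  | zero => intro s; exact Relation.EqvGen.refl _
  | succ n ih =>
    intro s
    have h1 : StringStep S1Rules (x :: t :: (List.replicate n t ++ s))
        (t :: x :: (List.replicate n t ++ s)) :=
      ⟨[], [x, t], [t, x], List.replicate n t ++ s, by simp [S1Rules], by simp, by simp⟩
    have h2 := eqvGen_context [t] [] (ih s)
    simp only [List.append_nil] at h2
    refine Relation.EqvGen.trans _ (t :: x :: (List.replicate n t ++ s)) _ ?_ ?_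
    · exact Relation.EqvGen.rel _ _ (by simpa [List.replicate_succ] using h1)
    · simpa [List.replicate_succ] using h2

/-- In the monoid S₁ presented by ⟨a, b, t, x, y ∣ ab = 1, xa = atx, xt = tx,
xb = bx, xy = 1⟩, the relation a tⁿ b = 1 holds for every n : the words
a tⁿ b and 1 are identified by the congruence generated by the relations. -/
theorem atnb_eq_one_in_S1 :
    ∀ n : ℕ, Relation.EqvGen (StringStep S1Rules)
      (a :: List.replicate n t ++ [b]) [] := by
  intro n
  induction n with
  | zero =>
    exact Relation.EqvGen.rel _ _ ⟨[], [a, b], [], [], by simp [S1Rules], by simp, by simp⟩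
  | succ n ih =>
    set T := List.replicate n t with hT
    -- h5 : a t^{n+1} b x y → a t^{n+1} b
    have h5 : StringStep S1Rules (a :: t :: T ++ [b, x, y]) (a :: t :: T ++ [b]) :=
      ⟨a :: t :: T ++ [b], [x, y], [], [], by simp [S1Rules], by simp, by simp⟩
    -- h4 : a t^{n+1} x b y → a t^{n+1} b x y
    have h4 : StringStep S1Rules (a :: t :: T ++ [x, b, y]) (a :: t :: T ++ [b, x, y]) :=
      ⟨a :: t :: T, [x, b], [b, x], [y], by simp [S1Rules], by simp, by simp⟩
    -- h3 : a t x tⁿ b y ≈ a t tⁿ x b y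
    have h3 : Relation.EqvGen (StringStep S1Rules)
        (a :: t :: x :: T ++ [b, y]) (a :: t :: T ++ [x, b, y]) := by
      have := eqvGen_context [a, t] [] (xt_move n [b, y])
      simpa using this
    -- h2 : x a tⁿ b y → a t x tⁿ b y
    have h2 : StringStep S1Rules (x :: a :: T ++ [b, y]) (a :: t :: x :: T ++ [b, y]) :=
      ⟨[], [x, a], [a, t, x], T ++ [b, y], by simp [S1Rules], by simp, by simp⟩
    -- hih : x a tⁿ b y ≈ x y
    have hih : Relation.EqvGen (StringStep S1Rules) (x :: a :: T ++ [b, y]) [x, y] := by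
      have := eqvGen_context [x] [y] ih
      simpa using this
    have hxy : StringStep S1Rules [x, y] ([] : List Sq) :=
      ⟨[], [x, y], [], [], by simp [S1Rules], by simp, by simp⟩
    have main : Relation.EqvGen (StringStep S1Rules) (a :: t :: T ++ [b]) [] := by
      refine Relation.EqvGen.trans _ _ _ ((Relation.EqvGen.rel _ _ h5).symm _ _) ?_
      refine Relation.EqvGen.trans _ _ _ ((Relation.EqvGen.rel _ _ h4).symm _ _) ?_
      refine Relation.EqvGen.trans _ _ _ (h3.symm _ _) ?_
      refine Relation.EqvGen.trans _ _ _ ((Relation.EqvGen.rel _ _ h2).symm _ _) ?_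
      exact Relation.EqvGen.trans _ _ _ hih (Relation.EqvGen.rel _ _ hxy)
    simpa [List.replicate_succ] using main
end

section
/- The string rewriting system on the alphabet {a, b, c, d, d'} with rules a cⁿ b → a cⁿ for all n ∈ ℕ, d a → a c, d' a → a c is convergent (terminating and confluent), and the monoid it presents is also presented by the finite system ⟨a, b, c, d, d' ∣ ab = a, da = ac, d'a = ac⟩. -/
/-- The alphabet {a, b, c, d, d'} of the Lafont–Prouté example. -/
inductive LP : Type
  | a : LP
  | b : LP
  | c : LP
  | d : LP
  | d' : LP

open LP

/-- The infinite system: a cⁿ b → a cⁿ (n ∈ ℕ), da → ac, d'a → ac. -/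
def LPInfRules : Set (List LP × List LP) :=
  {p | (∃ n : ℕ, p = (a :: List.replicate n c ++ [b], a :: List.replicate n c)) ∨
    p = ([d, a], [a, c]) ∨ p = ([d', a], [a, c])}

/-- The finite system: ab → a, da → ac, d'a → ac. -/
def LPFinRules : Set (List LP × List LP) :=
  {([a, b], [a]), ([d, a], [a, c]), ([d', a], [a, c])}

/-! ### Auxiliary machinery -/

deriving instance DecidableEq for LP

/-- Strip the `b`s out of the maximal prefix of `c`s and `b`s. -/
def strip : List LP → List LP
  | LP.b :: t => strip t
  | LP.c :: t => LP.c :: strip t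
  | t => t

/-- Insert a letter in front of a word, performing the evident reductions. -/
def ins : LP → List LP → List LP
  | LP.a, t => LP.a :: strip t
  | LP.d, (LP.a :: t) => LP.a :: LP.c :: t
  | LP.d', (LP.a :: t) => LP.a :: LP.c :: t
  | x, t => x :: t

/-- Candidate normal form function. -/
def nf (w : List LP) : List LP := w.foldr ins []

lemma strip_b (t : List LP) : strip (LP.b :: t) = strip t := rfl
lemma strip_c (t : List LP) : strip (LP.c :: t) = LP.c :: strip t := rfl
lemma ins_a (t : List LP) : ins LP.a t = LP.a :: strip t := rfl
lemma ins_b (t : List LP) : ins LP.b t = LP.b :: t := rfl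
lemma ins_c (t : List LP) : ins LP.c t = LP.c :: t := rfl

lemma strip_rep (n : ℕ) (t : List LP) :
    strip (List.replicate n LP.c ++ t) = List.replicate n LP.c ++ strip t := by
  induction n with
  | zero => simp
  | succ n ih => simp [List.replicate_succ, strip_c, ih]

lemma foldr_rep (n : ℕ) (m : List LP) :
    List.foldr ins m (List.replicate n LP.c) = List.replicate n LP.c ++ m := by
  induction n with
  | zero => simp
  | succ n ih => simp [List.replicate_succ, ins_c, ih]

lemma foldr_rule1 (n : ℕ) (m : List LP) :
    List.foldr ins m (LP.a :: List.replicate n LP.c ++ [LP.b]) =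
      List.foldr ins m (LP.a :: List.replicate n LP.c) := by
  simp [List.foldr_append, foldr_rep, ins_a, ins_b, strip_rep, strip_b,
    List.append_assoc]

lemma foldr_rule2 (m : List LP) :
    List.foldr ins m [LP.d, LP.a] = List.foldr ins m [LP.a, LP.c] := rfl

lemma foldr_rule3 (m : List LP) :
    List.foldr ins m [LP.d', LP.a] = List.foldr ins m [LP.a, LP.c] := rfl

lemma nf_eq_of_step {u v : List LP} (h : StringStep LPInfRules u v) : nf u = nf v := by
  obtain ⟨p, l, r, s, hr, rfl, rfl⟩ := h
  unfold nf
  rw [List.append_assoc, List.append_assoc, List.foldr_append, List.foldr_append,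
    List.foldr_append, List.foldr_append]
  congr 1
  rcases hr with ⟨n, hn⟩ | hn | hn <;>
    rw [Prod.ext_iff] at hn <;> obtain ⟨hl, hr'⟩ := hn <;> simp only at hl hr' <;>
    subst hl <;> subst hr'
  · exact foldr_rule1 n _
  · exact foldr_rule2 _
  · exact foldr_rule3 _

lemma step_cons {R : Set (List LP × List LP)} {x : LP} {u v : List LP}
    (h : StringStep R u v) : StringStep R (x :: u) (x :: v) := by
  obtain ⟨p, l, r, s, hr, rfl, rfl⟩ := h
  exact ⟨x :: p, l, r, s, hr, rfl, rfl⟩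

lemma steps_cons {R : Set (List LP × List LP)} (x : LP) {u v : List LP}
    (h : Relation.ReflTransGen (StringStep R) u v) :
    Relation.ReflTransGen (StringStep R) (x :: u) (x :: v) :=
  Relation.ReflTransGen.lift (x :: ·) (fun _ _ h => step_cons h) _ _ h

lemma strip_steps (t : List LP) : ∀ k : ℕ,
    Relation.ReflTransGen (StringStep LPInfRules)
      (LP.a :: (List.replicate k LP.c ++ t))
      (LP.a :: (List.replicate k LP.c ++ strip t)) := by
  induction t with
  | nil => intro k; simp only [strip]; exact Relation.ReflTransGen.refl
  | cons x t ih =>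
    intro k
    cases x with
    | b =>
      have h1 : StringStep LPInfRules (LP.a :: (List.replicate k LP.c ++ LP.b :: t))
          (LP.a :: (List.replicate k LP.c ++ t)) := by
        refine ⟨[], LP.a :: List.replicate k LP.c ++ [LP.b], LP.a :: List.replicate k LP.c,
          t, Or.inl ⟨k, rfl⟩, by simp, by simp⟩
      exact Relation.ReflTransGen.head h1 (by simpa [strip_b] using ih k)
    | c =>
      have h := ih (k + 1)
      have e : List.replicate (k + 1) LP.c ++ t = List.replicate k LP.c ++ LP.c :: t := by
        simp [List.replicate_succ']
      have e2 : List.replicate (k + 1) LP.c ++ strip t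
          = List.replicate k LP.c ++ strip (LP.c :: t) := by
        simp [List.replicate_succ', strip_c]
      rw [e, e2] at h
      exact h
    | a => simp only [strip]; exact Relation.ReflTransGen.refl
    | d => simp only [strip]; exact Relation.ReflTransGen.refl
    | d' => simp only [strip]; exact Relation.ReflTransGen.refl

lemma nf_reduce (u : List LP) :
    Relation.ReflTransGen (StringStep LPInfRules) u (nf u) := by
  induction u with
  | nil => exact Relation.ReflTransGen.refl
  | cons x w ih =>
    have h1 : Relation.ReflTransGen (StringStep LPInfRules) (x :: w) (x :: nf w) :=
      steps_cons x ih
    refine h1.trans ?_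
    show Relation.ReflTransGen (StringStep LPInfRules) (x :: nf w) (ins x (nf w))
    cases x with
    | a => simpa [ins_a] using strip_steps (nf w) 0
    | b => rw [ins_b]
    | c => rw [ins_c]
    | d =>
      rcases hw : nf w with _ | ⟨y, t⟩
      · exact Relation.ReflTransGen.refl
      · cases y with
        | a =>
          exact Relation.ReflTransGen.single
            ⟨[], [LP.d, LP.a], [LP.a, LP.c], t, Or.inr (Or.inl rfl), rfl, rfl⟩
        | b => exact Relation.ReflTransGen.refl
        | c => exact Relation.ReflTransGen.refl
        | d => exact Relation.ReflTransGen.refl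
        | d' => exact Relation.ReflTransGen.refl
    | d' =>
      rcases hw : nf w with _ | ⟨y, t⟩
      · exact Relation.ReflTransGen.refl
      · cases y with
        | a =>
          exact Relation.ReflTransGen.single
            ⟨[], [LP.d', LP.a], [LP.a, LP.c], t, Or.inr (Or.inr rfl), rfl, rfl⟩
        | b => exact Relation.ReflTransGen.refl
        | c => exact Relation.ReflTransGen.refl
        | d => exact Relation.ReflTransGen.refl
        | d' => exact Relation.ReflTransGen.refl

lemma nf_eq_of_steps {u v : List LP}
    (h : Relation.ReflTransGen (StringStep LPInfRules) u v) : nf u = nf v := by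
  induction h with
  | refl => rfl
  | tail _ h2 ih => exact ih.trans (nf_eq_of_step h2)

/-- Termination measure. -/
def mu (w : List LP) : ℕ := w.length + w.count LP.d + w.count LP.d'

lemma mu_append (u v : List LP) : mu (u ++ v) = mu u + mu v := by
  simp [mu, List.count_append]; omega

lemma mu_step {u v : List LP} (h : StringStep LPInfRules u v) : mu v < mu u := by
  obtain ⟨p, l, r, s, hr, rfl, rfl⟩ := h
  rw [mu_append, mu_append, mu_append, mu_append]
  have : mu r < mu l := by
    rcases hr with ⟨n, hn⟩ | hn | hn <;>
      rw [Prod.ext_iff] at hn <;> obtain ⟨hl, hr'⟩ := hn <;> simp only at hl hr' <;>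
      subst hl <;> subst hr'
    · simp [mu, List.count_append, List.count_cons, List.count_replicate]
    · decide
    · decide
  omega

lemma fin_sub_inf : LPFinRules ⊆ LPInfRules := by
  intro x hx
  rcases hx with h | h | h
  · subst h; exact Or.inl ⟨0, rfl⟩
  · subst h; exact Or.inr (Or.inl rfl)
  · rw [Set.mem_singleton_iff] at h; subst h; exact Or.inr (Or.inr rfl)

lemma fin_acnb (n : ℕ) : ∀ p s : List LP,
    Relation.EqvGen (StringStep LPFinRules)
      (p ++ (LP.a :: List.replicate n LP.c ++ [LP.b]) ++ s)
      (p ++ (LP.a :: List.replicate n LP.c) ++ s) := by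
  induction n with
  | zero =>
    intro p s
    exact Relation.EqvGen.rel _ _
      ⟨p, [LP.a, LP.b], [LP.a], s, by simp [LPFinRules], by simp, by simp⟩
  | succ n ih =>
    intro p s
    have h1 : StringStep LPFinRules
        (p ++ [LP.d, LP.a] ++ (List.replicate n LP.c ++ [LP.b] ++ s))
        (p ++ [LP.a, LP.c] ++ (List.replicate n LP.c ++ [LP.b] ++ s)) :=
      ⟨p, _, _, _, by simp [LPFinRules], rfl, rfl⟩
    have h2 := ih (p ++ [LP.d]) s
    have h3 : StringStep LPFinRules
        (p ++ [LP.d, LP.a] ++ (List.replicate n LP.c ++ s))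
        (p ++ [LP.a, LP.c] ++ (List.replicate n LP.c ++ s)) :=
      ⟨p, _, _, _, by simp [LPFinRules], rfl, rfl⟩
    have e1 : p ++ [LP.a, LP.c] ++ (List.replicate n LP.c ++ [LP.b] ++ s)
        = p ++ (LP.a :: List.replicate (n + 1) LP.c ++ [LP.b]) ++ s := by
      simp [List.replicate_succ]
    have e2 : p ++ [LP.d, LP.a] ++ (List.replicate n LP.c ++ [LP.b] ++ s)
        = (p ++ [LP.d]) ++ (LP.a :: List.replicate n LP.c ++ [LP.b]) ++ s := by
      simp
    have e3 : p ++ [LP.d, LP.a] ++ (List.replicate n LP.c ++ s)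
        = (p ++ [LP.d]) ++ (LP.a :: List.replicate n LP.c) ++ s := by
      simp
    have e4 : p ++ [LP.a, LP.c] ++ (List.replicate n LP.c ++ s)
        = p ++ (LP.a :: List.replicate (n + 1) LP.c) ++ s := by
      simp [List.replicate_succ]
    rw [e1, e2] at h1
    rw [e3, e4] at h3
    exact Relation.EqvGen.trans _ _ _
      (Relation.EqvGen.trans _ _ _
        (Relation.EqvGen.symm _ _ (Relation.EqvGen.rel _ _ h1)) h2)
      (Relation.EqvGen.rel _ _ h3)

/-- The infinite string rewriting system with rules a cⁿ b → a cⁿ (n ∈ ℕ),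
da → ac, d'a → ac is convergent — terminating and confluent — and it presents
the same monoid as the finite system ⟨a, b, c, d, d' ∣ ab = a, da = ac,
d'a = ac⟩: the two systems generate the same congruence on the free monoid. -/
theorem LP_infinite_system_convergent_and_presents_same_monoid :
    (¬ ∃ f : ℕ → List LP, ∀ n : ℕ, StringStep LPInfRules (f n) (f (n + 1))) ∧
    (∀ u v w : List LP,
      Relation.ReflTransGen (StringStep LPInfRules) u v →
      Relation.ReflTransGen (StringStep LPInfRules) u w →
      ∃ z : List LP, Relation.ReflTransGen (StringStep LPInfRules) v z ∧
        Relation.ReflTransGen (StringStep LPInfRules) w z) ∧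
    (∀ u v : List LP, Relation.EqvGen (StringStep LPInfRules) u v ↔
      Relation.EqvGen (StringStep LPFinRules) u v) := by
  refine ⟨?_, ?_, ?_⟩
  · rintro ⟨f, hf⟩
    have key : ∀ n, mu (f (n + 1)) < mu (f n) := fun n => mu_step (hf n)
    have h : ∀ n, mu (f n) + n ≤ mu (f 0) := by
      intro n
      induction n with
      | zero => simp
      | succ n ih => have := key n; omega
    have := h (mu (f 0) + 1)
    omega
  · intro u v w huv huw
    refine ⟨nf u, ?_, ?_⟩
    · rw [nf_eq_of_steps huv]; exact nf_reduce v
    · rw [nf_eq_of_steps huw]; exact nf_reduce w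
  · intro u v
    constructor
    · intro h
      induction h with
      | rel x y hxy =>
        obtain ⟨p, l, r, s, hr, rfl, rfl⟩ := hxy
        rcases hr with ⟨n, hn⟩ | hn | hn <;>
          rw [Prod.ext_iff] at hn <;> obtain ⟨hl, hr'⟩ := hn <;> simp only at hl hr' <;>
          subst hl <;> subst hr'
        · exact fin_acnb n p s
        · exact Relation.EqvGen.rel _ _ ⟨p, _, _, s, by simp [LPFinRules], rfl, rfl⟩
        · exact Relation.EqvGen.rel _ _ ⟨p, _, _, s, by simp [LPFinRules], rfl, rfl⟩
      | refl x => exact Relation.EqvGen.refl x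
      | symm x y _ ih => exact Relation.EqvGen.symm x y ih
      | trans x y z _ _ ih1 ih2 => exact Relation.EqvGen.trans x y z ih1 ih2
    · intro h
      refine Relation.EqvGen.mono ?_ _ _ h
      rintro u' v' ⟨p, l, r, s, hr, rfl, rfl⟩
      exact ⟨p, l, r, s, fin_sub_inf hr, rfl, rfl⟩
end
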